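/- Let b > 1, b ≠ 3, 5, 7, ..., C ≠ 0, and Ω(x) = C·x·(1-x²)^{(b-1)/2}·₂F₁((1-b)/2, b/2; 3/2; x²). Then lim_{x→1⁻} Ω(x) = 0; hence the boundary condition lim_{x→1} Ω(x) = C_ω ≠ 0 cannot be satisfied. -/

import Mathlib

open Real Set Filter

/-- The Gaussian hypergeometric function ₂F₁(a,b;c;x) as a power series. -/
noncomputable def twoF1 (a b c x : ℝ) : ℝ :=
  ∑' n : ℕ, ((ascPochhammer ℝ n).eval a * (ascPochhammer ℝ n).eval b)
    / ((ascPochhammer ℝ n).eval c * (n.factorial : ℝ)) * x ^ n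

noncomputable def hcoef (b : ℝ) (n : ℕ) : ℝ :=
  ((ascPochhammer ℝ n).eval ((1-b)/2) * (ascPochhammer ℝ n).eval (b/2))
    / ((ascPochhammer ℝ n).eval (3/2) * (n.factorial : ℝ))

lemma hcoef_rec (b : ℝ) (n : ℕ) :
    hcoef b (n+1) = hcoef b n * ((((1-b)/2 + n) * (b/2 + n)) / ((3/2 + n) * (n+1))) := by
  have h1 : (0:ℝ) < (ascPochhammer ℝ n).eval (3/2) := ascPochhammer_pos n _ (by norm_num)
  have h2 : (0:ℝ) < (n.factorial : ℝ) := by positivity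
  have h3 : (0:ℝ) < (3/2 + (n:ℝ)) := by positivity
  have h4 : (0:ℝ) < ((n:ℝ)+1) := by positivity
  simp only [hcoef, ascPochhammer_succ_eval, Nat.factorial_succ]
  push_cast
  field_simp

lemma hcoef_ratio (b : ℝ) (n : ℕ) (hn : (b-1)/2 ≤ n) (hb : 1 < b) :
    |hcoef b (n+1)| ≤ |hcoef b n| * (((n:ℝ)+1) / ((n:ℝ)+3)) := by
  have hnum1 : (0:ℝ) ≤ (1-b)/2 + n := by linarith
  have hnum2 : (0:ℝ) ≤ b/2 + n := by positivity
  have hden : (0:ℝ) < (3/2 + (n:ℝ)) * ((n:ℝ)+1) := by positivity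
  rw [hcoef_rec, abs_mul]
  gcongr
  rw [abs_of_nonneg (by positivity)]
  rw [div_le_div_iff₀ hden (by positivity)]
  nlinarith [sq_nonneg (b/2 - 1/4), sq_nonneg ((n:ℝ)+1/4)]

lemma hcoef_decay (b : ℝ) (hb : 1 < b) (N : ℕ) (hN : (b-1)/2 ≤ N) (k : ℕ) :
    |hcoef b (N+k)| ≤ |hcoef b N| * (((N:ℝ)+1) * ((N:ℝ)+2)) / (((N:ℝ)+k+1) * ((N:ℝ)+k+2)) := by
  induction k with
  | zero =>
    simp only [Nat.add_zero, Nat.cast_zero, add_zero]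
    rw [mul_div_assoc, div_self (by positivity), mul_one]
  | succ k ih =>
    have hstep := hcoef_ratio b (N+k) (by push_cast; linarith [Nat.cast_nonneg (α := ℝ) k]) hb
    have h2 : |hcoef b (N+k)| * (((N:ℝ)+k+1) / ((N:ℝ)+k+3))
        ≤ (|hcoef b N| * (((N:ℝ)+1) * ((N:ℝ)+2)) / (((N:ℝ)+k+1) * ((N:ℝ)+k+2)))
          * (((N:ℝ)+k+1) / ((N:ℝ)+k+3)) := by
      gcongr
    have heq : (|hcoef b N| * (((N:ℝ)+1) * ((N:ℝ)+2)) / (((N:ℝ)+k+1) * ((N:ℝ)+k+2)))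
          * (((N:ℝ)+k+1) / ((N:ℝ)+k+3))
        = |hcoef b N| * (((N:ℝ)+1) * ((N:ℝ)+2)) / (((N:ℝ)+(k+1)+1) * ((N:ℝ)+(k+1)+2)) := by
      have h1 : ((N:ℝ)+k+1) ≠ 0 := by positivity
      have h2 : ((N:ℝ)+k+2) ≠ 0 := by positivity
      have h3 : ((N:ℝ)+k+3) ≠ 0 := by positivity
      field_simp
      ring
    calc |hcoef b (N+(k+1))| ≤ |hcoef b (N+k)| * (((N:ℝ)+k+1) / ((N:ℝ)+k+3)) := by
          convert hstep using 3 <;> push_cast <;> ring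
      _ ≤ _ := by push_cast; rw [← heq]; exact h2

lemma hcoef_summable (b : ℝ) (hb : 1 < b) : Summable (fun n => |hcoef b n|) := by
  obtain ⟨N, hN⟩ := exists_nat_ge ((b-1)/2)
  rw [← summable_nat_add_iff N]
  have hsum : Summable (fun k : ℕ => |hcoef b N| * (((N:ℝ)+1) * ((N:ℝ)+2)) / (((k:ℝ)+1)^2)) := by
    apply Summable.mul_left
    have := summable_nat_add_iff (f := fun n : ℕ => 1 / ((n:ℝ))^2) 1
    simp only [one_div] at this ⊢
    push_cast at this
    rw [this]
    simpa using Real.summable_one_div_nat_pow.mpr (by norm_num : 1 < 2)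
  apply Summable.of_nonneg_of_le (fun k => abs_nonneg _) _ hsum
  intro k
  calc |hcoef b (k+N)| = |hcoef b (N+k)| := by rw [Nat.add_comm]
    _ ≤ |hcoef b N| * (((N:ℝ)+1) * ((N:ℝ)+2)) / (((N:ℝ)+k+1) * ((N:ℝ)+k+2)) :=
        hcoef_decay b hb N hN k
    _ ≤ |hcoef b N| * (((N:ℝ)+1) * ((N:ℝ)+2)) / (((k:ℝ)+1)^2) := by
        apply div_le_div_of_nonneg_left (by positivity) (by positivity)
        nlinarith [Nat.cast_nonneg (α := ℝ) N, Nat.cast_nonneg (α := ℝ) k]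

lemma twoF1_bound (b : ℝ) (hb : 1 < b) (y : ℝ) (hy : |y| ≤ 1) :
    |twoF1 ((1-b)/2) (b/2) (3/2) y| ≤ ∑' n, |hcoef b n| := by
  have hS := hcoef_summable b hb
  have hterm : ∀ n : ℕ, |hcoef b n * y ^ n| ≤ |hcoef b n| := by
    intro n
    rw [abs_mul]
    calc |hcoef b n| * |y ^ n| ≤ |hcoef b n| * 1 := by
          apply mul_le_mul_of_nonneg_left _ (abs_nonneg _)
          rw [abs_pow]; exact pow_le_one₀ (abs_nonneg _) hy
      _ = |hcoef b n| := mul_one _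
  have hsum : Summable (fun n => |hcoef b n * y ^ n|) :=
    Summable.of_nonneg_of_le (fun n => abs_nonneg _) hterm hS
  have heq : twoF1 ((1-b)/2) (b/2) (3/2) y = ∑' n, hcoef b n * y ^ n := by
    unfold twoF1 hcoef
    rfl
  rw [heq]
  have hnorm : Summable (fun n : ℕ => ‖hcoef b n * y ^ n‖) := by
    simpa only [Real.norm_eq_abs] using hsum
  calc |∑' n, hcoef b n * y ^ n| ≤ ∑' n, |hcoef b n * y ^ n| := by
        have h := norm_tsum_le_tsum_norm hnorm
        simpa only [Real.norm_eq_abs] using h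
    _ ≤ ∑' n, |hcoef b n| := Summable.tsum_le_tsum hterm hsum hS

theorem stmt_8 (b C : ℝ) (hb : 1 < b) (hodd : ∀ k : ℕ, b ≠ 2 * k + 3) (hC : C ≠ 0) :
    Tendsto
      (fun x : ℝ => C * x * (1 - x^2) ^ ((b-1)/2) * twoF1 ((1-b)/2) (b/2) (3/2) (x^2))
      (nhdsWithin 1 (Iio 1)) (nhds 0)
    ∧ ∀ Cω : ℝ, Cω ≠ 0 →
      ¬ Tendsto
        (fun x : ℝ => C * x * (1 - x^2) ^ ((b-1)/2) * twoF1 ((1-b)/2) (b/2) (3/2) (x^2))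
        (nhdsWithin 1 (Iio 1)) (nhds Cω) := by
  have hp : 0 < (b-1)/2 := by linarith
  have hmain : Tendsto
      (fun x : ℝ => C * x * (1 - x^2) ^ ((b-1)/2) * twoF1 ((1-b)/2) (b/2) (3/2) (x^2))
      (nhdsWithin 1 (Iio 1)) (nhds 0) := by
    apply Filter.Tendsto.zero_mul_isBoundedUnder_le
    · -- C * x * (1-x^2)^p → 0
      have h1 : Tendsto (fun x : ℝ => C * x) (nhdsWithin 1 (Iio 1)) (nhds C) := by
        have h0 : Tendsto (fun x : ℝ => C * x) (nhds 1) (nhds (C * 1)) :=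
          Continuous.tendsto (by continuity) 1
        simpa using h0.mono_left nhdsWithin_le_nhds
      have h2 : Tendsto (fun x : ℝ => (1 - x^2) ^ ((b-1)/2)) (nhdsWithin 1 (Iio 1)) (nhds 0) := by
        have hin : Tendsto (fun x : ℝ => 1 - x^2) (nhdsWithin 1 (Iio 1)) (nhds 0) := by
          have h0 : Tendsto (fun x : ℝ => 1 - x^2) (nhds 1) (nhds (1 - 1^2)) :=
            Continuous.tendsto (by continuity) 1
          simpa using h0.mono_left nhdsWithin_le_nhds
        have hcont : ContinuousAt (fun y : ℝ => y ^ ((b-1)/2)) 0 :=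
          Real.continuousAt_rpow_const 0 _ (Or.inr hp.le)
        have := hcont.tendsto.comp hin
        simpa [Function.comp_def, Real.zero_rpow (ne_of_gt hp)] using this
      have := h1.mul h2
      simpa using this
    · refine ⟨∑' n, |hcoef b n|, ?_⟩
      rw [Filter.eventually_map]
      have hev : ∀ᶠ x : ℝ in nhdsWithin 1 (Iio 1), |x| ≤ 1 := by
        filter_upwards [self_mem_nhdsWithin,
          eventually_nhdsWithin_of_eventually_nhds
            (eventually_gt_nhds (show (-1:ℝ) < 1 by norm_num))] with x hx1 hx2
        rw [abs_le]; exact ⟨le_of_lt hx2, le_of_lt hx1⟩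
      filter_upwards [hev] with x hx
      have : |x^2| ≤ 1 := by rw [abs_pow]; exact pow_le_one₀ (abs_nonneg _) hx
      simpa using twoF1_bound b hb (x^2) this
  refine ⟨hmain, fun Cω hCω htend => ?_⟩
  exact hCω (tendsto_nhds_unique htend hmain)
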